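/- arXiv:1805.05179 — 3 statements merged into one kernel-verified Lean document; each statement's English description precedes it below -/
import Mathlib

section
/- For every natural number α ≥ 1, there exists a constant C such that for all t ≥ 0, ∫₀ᵗ exp(−2(√(1+t) − √(1+s))) (1+s)^{−(1+α)/2} ds ≤ C (1+t)^{−α/2}. -/
private lemma pt_bound (C a E r s : ℝ) (hE : 0 < E) (hr : 0 < r) (hs : 0 < s)
    (hsa : a ≤ s) (hC : 2 ≤ C) (ha : 0 < a) :
    E * r ≤ C * (E * (2 * (1 / (2 * s))) * (r * s) + E * (1 * (-a / 2) * (r / s))) := by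
  have e1 : E * (2 * (1 / (2 * s))) * (r * s) = E * r := by field_simp
  have e2 : E * (1 * (-a / 2) * (r / s)) = -((a / 2) * (E * r / s)) := by ring
  rw [e1, e2]
  have hEr : 0 < E * r := mul_pos hE hr
  have h4 : E * r / s ≤ E * r / a := by
    apply div_le_div_of_nonneg_left hEr.le ha hsa
  have h5 : (a / 2) * (E * r / s) ≤ (1 / 2) * (E * r) := by
    calc (a / 2) * (E * r / s) ≤ (a / 2) * (E * r / a) := by nlinarith
      _ = (1 / 2) * (E * r) := by field_simp
  nlinarith [mul_le_mul_of_nonneg_left h5 (by linarith : (0:ℝ) ≤ C),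
    mul_le_mul_of_nonneg_right hC hEr.le]

/-- Calculus lemma: for every natural `α ≥ 1` there is `C > 0` such that for all `t ≥ 0`,
`∫₀ᵗ e^{−2(√(1+t) − √(1+s))} (1+s)^{−(1+α)/2} ds ≤ C (1+t)^{−α/2}`. -/
theorem stmt_2 (α : ℕ) (hα : 1 ≤ α) :
    ∃ C > (0:ℝ), ∀ t : ℝ, 0 ≤ t →
      (∫ s in (0:ℝ)..t,
          Real.exp (-2 * (Real.sqrt (1 + t) - Real.sqrt (1 + s))) *
            (1 + s) ^ (-(1 + (α : ℝ)) / 2)) ≤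
        C * (1 + t) ^ (-(α : ℝ) / 2) := by
  set a : ℝ := (α : ℝ) with ha_def
  have ha : (1:ℝ) ≤ a := by rw [ha_def]; exact_mod_cast hα
  have ha0 : (0:ℝ) < a := lt_of_lt_of_le one_pos ha
  set C : ℝ := 2 + a ^ 2 * (1 + a ^ 2) ^ (a / 2) with hC_def
  have hC2 : (2:ℝ) ≤ C := le_add_of_nonneg_right (by positivity)
  have hC0 : (0:ℝ) < C := lt_of_lt_of_le two_pos hC2
  refine ⟨C, hC0, ?_⟩
  -- the auxiliary function
  set f : ℝ → ℝ := fun s => Real.exp (2 * Real.sqrt (1 + s)) * (1 + s) ^ (-(1 + a) / 2)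
    with hf_def
  -- continuity / integrability of f on nonneg intervals
  have hfc : ∀ u v : ℝ, 0 ≤ u → 0 ≤ v → IntervalIntegrable f MeasureTheory.volume u v := by
    intro u v hu hv
    apply ContinuousOn.intervalIntegrable
    have hsub : Set.uIcc u v ⊆ {x : ℝ | 0 ≤ x} := by
      intro x hx
      have := hx.1
      simp only [Set.mem_setOf_eq]
      rcases le_total u v with h | h
      · exact le_trans hu ((Set.uIcc_of_le h ▸ hx).1)
      · exact le_trans hv ((Set.uIcc_of_ge h ▸ hx).1)
    apply ContinuousOn.mono _ hsub
    apply ContinuousOn.mul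
    · exact (Real.continuous_exp.comp (continuous_const.mul
        (Real.continuous_sqrt.comp (continuous_const.add continuous_id)))).continuousOn
    · apply ContinuousOn.rpow_const
      · exact (continuous_const.add continuous_id).continuousOn
      · intro x hx
        left
        have : (0:ℝ) ≤ x := hx
        positivity
  -- small interval bound
  have hsm : ∀ u v : ℝ, 0 ≤ u → u ≤ v →
      (∫ s in u..v, f s) ≤ (v - u) * Real.exp (2 * Real.sqrt (1 + v)) := by
    intro u v hu huv
    have hv : 0 ≤ v := le_trans hu huv
    have h1 : (∫ s in u..v, f s) ≤ ∫ _s in u..v, Real.exp (2 * Real.sqrt (1 + v)) := by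
      apply intervalIntegral.integral_mono_on huv (hfc u v hu hv) intervalIntegrable_const
      intro x hx
      have hx0 : 0 ≤ x := le_trans hu hx.1
      have h1x : (0:ℝ) < 1 + x := by linarith
      have hr1 : (1 + x) ^ (-(1 + a) / 2) ≤ 1 :=
        Real.rpow_le_one_of_one_le_of_nonpos (by linarith) (by linarith)
      have hexple : Real.exp (2 * Real.sqrt (1 + x)) ≤ Real.exp (2 * Real.sqrt (1 + v)) := by
        apply Real.exp_le_exp.2
        have := Real.sqrt_le_sqrt (show (1:ℝ) + x ≤ 1 + v by linarith [hx.2])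
        linarith
      have hexp0 : (0:ℝ) < Real.exp (2 * Real.sqrt (1 + x)) := Real.exp_pos _
      have hr0 : (0:ℝ) ≤ (1 + x) ^ (-(1 + a) / 2) := Real.rpow_nonneg h1x.le _
      calc f x = Real.exp (2 * Real.sqrt (1 + x)) * (1 + x) ^ (-(1 + a) / 2) := rfl
        _ ≤ Real.exp (2 * Real.sqrt (1 + x)) * 1 := by nlinarith
        _ ≤ Real.exp (2 * Real.sqrt (1 + v)) := by linarith
    rw [intervalIntegral.integral_const, smul_eq_mul] at h1
    exact h1
  -- the key small-t inequality
  have hkey1 : ∀ u : ℝ, 0 ≤ u → u ≤ a ^ 2 → u ≤ C * (1 + u) ^ (-a / 2) := by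
    intro u hu hua
    have h1u : (0:ℝ) < 1 + u := by linarith
    have hp : (0:ℝ) < (1 + u) ^ (a / 2) := Real.rpow_pos_of_pos h1u _
    have hpow : (1 + u) ^ (a / 2) ≤ (1 + a ^ 2) ^ (a / 2) :=
      Real.rpow_le_rpow h1u.le (by linarith) (by positivity)
    have : u * (1 + u) ^ (a / 2) ≤ C := by
      have h2 : u * (1 + u) ^ (a / 2) ≤ a ^ 2 * (1 + a ^ 2) ^ (a / 2) :=
        mul_le_mul hua hpow hp.le (by positivity)
      rw [hC_def]; linarith
    have heq : C * (1 + u) ^ (-a / 2) = C / (1 + u) ^ (a / 2) := by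
      rw [neg_div, Real.rpow_neg h1u.le]
      exact (div_eq_mul_inv _ _).symm
    rw [heq, le_div_iff₀ hp]
    exact this
  intro t ht
  have h1t : (0:ℝ) < 1 + t := by linarith
  -- rewrite the integral
  have hrw : (∫ s in (0:ℝ)..t,
        Real.exp (-2 * (Real.sqrt (1 + t) - Real.sqrt (1 + s))) * (1 + s) ^ (-(1 + a) / 2))
      = Real.exp (-(2 * Real.sqrt (1 + t))) * ∫ s in (0:ℝ)..t, f s := by
    rw [← intervalIntegral.integral_const_mul]
    apply intervalIntegral.integral_congr
    intro s _
    simp only [hf_def]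
    rw [← mul_assoc, ← Real.exp_add]
    ring_nf
  -- key inequality: ∫ f ≤ C * (exp(2√(1+t)) * (1+t)^(-a/2))
  have key : (∫ s in (0:ℝ)..t, f s)
      ≤ C * (Real.exp (2 * Real.sqrt (1 + t)) * (1 + t) ^ (-a / 2)) := by
    rcases le_or_gt t (a ^ 2) with hcase | hcase
    · -- small t
      have h1 := hsm 0 t le_rfl ht
      have h2 := hkey1 t ht hcase
      have hE : (0:ℝ) < Real.exp (2 * Real.sqrt (1 + t)) := Real.exp_pos _
      calc (∫ s in (0:ℝ)..t, f s) ≤ (t - 0) * Real.exp (2 * Real.sqrt (1 + t)) := h1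
        _ ≤ (C * (1 + t) ^ (-a / 2)) * Real.exp (2 * Real.sqrt (1 + t)) := by
            apply mul_le_mul_of_nonneg_right _ hE.le
            linarith
        _ = C * (Real.exp (2 * Real.sqrt (1 + t)) * (1 + t) ^ (-a / 2)) := by ring
    · -- large t: t0 = a^2
      set t0 : ℝ := a ^ 2 with ht0_def
      have ht0 : (0:ℝ) ≤ t0 := by positivity
      have h1t0 : (0:ℝ) < 1 + t0 := by linarith
      -- derivative of G
      set G : ℝ → ℝ := fun y =>
        C * (Real.exp (2 * Real.sqrt (1 + y)) * (1 + y) ^ (-a / 2)) with hG_def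
      set gd : ℝ → ℝ := fun x =>
        C * (Real.exp (2 * Real.sqrt (1 + x)) * (2 * (1 / (2 * Real.sqrt (1 + x))))
              * ((1 + x) ^ (-a / 2))
           + Real.exp (2 * Real.sqrt (1 + x)) * (1 * (-a / 2) * (1 + x) ^ (-a / 2 - 1)))
        with hgd_def
      have hGderiv : ∀ x : ℝ, 0 < 1 + x → HasDerivAt G (gd x) x := by
        intro x hx
        have hsx : Real.sqrt (1 + x) ≠ 0 := by positivity
        have hs1 : HasDerivAt (fun y : ℝ => Real.sqrt (1 + y)) (1 / (2 * Real.sqrt (1 + x))) x := by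
          have h := (Real.hasDerivAt_sqrt hx.ne').comp x ((hasDerivAt_id x).const_add 1)
          simpa [Function.comp_def] using h
        have hexp : HasDerivAt (fun y : ℝ => Real.exp (2 * Real.sqrt (1 + y)))
            (Real.exp (2 * Real.sqrt (1 + x)) * (2 * (1 / (2 * Real.sqrt (1 + x))))) x :=
          (hs1.const_mul 2).exp
        have hr : HasDerivAt (fun y : ℝ => (1 + y) ^ (-a / 2))
            (1 * (-a / 2) * (1 + x) ^ (-a / 2 - 1)) x := by
          have h := ((hasDerivAt_id x).const_add 1).rpow_const (p := -a / 2) (Or.inl hx.ne')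
          simpa using h
        have := (hexp.mul hr).const_mul C
        simpa [hG_def, hgd_def, mul_add] using this
      -- integrability of gd on [t0, t]
      have hgdint : IntervalIntegrable gd MeasureTheory.volume t0 t := by
        apply ContinuousOn.intervalIntegrable
        have hsub : Set.uIcc t0 t ⊆ {x : ℝ | 0 < 1 + x} := by
          rw [Set.uIcc_of_le hcase.le]
          intro x hx
          simp only [Set.mem_setOf_eq]
          have := hx.1
          linarith
        apply ContinuousOn.mono _ hsub
        have hcs : ContinuousOn (fun x : ℝ => Real.sqrt (1 + x)) {x : ℝ | 0 < 1 + x} :=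
          (Real.continuous_sqrt.comp (continuous_const.add continuous_id)).continuousOn
        have hce : ContinuousOn (fun x : ℝ => Real.exp (2 * Real.sqrt (1 + x)))
            {x : ℝ | 0 < 1 + x} :=
          (Real.continuous_exp.comp (continuous_const.mul
            (Real.continuous_sqrt.comp (continuous_const.add continuous_id)))).continuousOn
        have hb : ContinuousOn (fun x : ℝ => (1:ℝ) + x) {x : ℝ | 0 < 1 + x} :=
          (continuous_const.add continuous_id).continuousOn
        have hne : ∀ x ∈ {x : ℝ | 0 < 1 + x}, (1:ℝ) + x ≠ 0 := fun x hx => (hx : _ < _).ne'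
        have hsne : ∀ x ∈ {x : ℝ | 0 < 1 + x}, 2 * Real.sqrt (1 + x) ≠ 0 := by
          intro x hx
          have : (0:ℝ) < 1 + x := hx
          positivity
        apply ContinuousOn.mul continuousOn_const
        apply ContinuousOn.add
        · exact (hce.mul (continuousOn_const.mul
            (ContinuousOn.div continuousOn_const (continuousOn_const.mul hcs) hsne))).mul
            (hb.rpow_const (fun x hx => Or.inl (hne x hx)))
        · exact hce.mul (continuousOn_const.mul
            (hb.rpow_const (fun x hx => Or.inl (hne x hx))))
      -- FTC on [t0, t]
      have hftc : (∫ x in t0..t, gd x) = G t - G t0 := by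
        apply intervalIntegral.integral_eq_sub_of_hasDerivAt _ hgdint
        intro x hx
        rw [Set.uIcc_of_le hcase.le] at hx
        exact hGderiv x (by linarith [hx.1, ht0])
      -- pointwise comparison on [t0, t]
      have hpt : ∀ x ∈ Set.Icc t0 t, f x ≤ gd x := by
        intro x hx
        have hx0 : t0 ≤ x := hx.1
        have h1x : (0:ℝ) < 1 + x := by linarith
        have hsx : (0:ℝ) < Real.sqrt (1 + x) := Real.sqrt_pos.2 h1x
        have hsa2 : a ≤ Real.sqrt (1 + x) := by
          have h := Real.sqrt_le_sqrt (show a ^ 2 ≤ 1 + x by linarith)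
          rwa [Real.sqrt_sq ha0.le] at h
        -- rpow identities
        have id1 : (1 + x) ^ (-a / 2) = (1 + x) ^ (-(1 + a) / 2) * Real.sqrt (1 + x) := by
          rw [Real.sqrt_eq_rpow, ← Real.rpow_add h1x]
          congr 1
          ring
        have id2 : (1 + x) ^ (-a / 2 - 1) = (1 + x) ^ (-(1 + a) / 2) / Real.sqrt (1 + x) := by
          rw [Real.sqrt_eq_rpow,
            eq_div_iff (ne_of_gt (Real.rpow_pos_of_pos h1x (1 / 2))),
            ← Real.rpow_add h1x]
          congr 1
          ring
        have hr0 : (0:ℝ) < (1 + x) ^ (-(1 + a) / 2) := Real.rpow_pos_of_pos h1x _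
        have hE0 : (0:ℝ) < Real.exp (2 * Real.sqrt (1 + x)) := Real.exp_pos _
        show Real.exp (2 * Real.sqrt (1 + x)) * (1 + x) ^ (-(1 + a) / 2) ≤ _
        simp only [hgd_def, id1, id2]
        exact pt_bound C a _ _ _ hE0 hr0 hsx hsa2 hC2 ha0
      -- combine
      have hsplit : (∫ s in (0:ℝ)..t, f s)
          = (∫ s in (0:ℝ)..t0, f s) + ∫ s in t0..t, f s :=
        (intervalIntegral.integral_add_adjacent_intervals (hfc 0 t0 le_rfl ht0)
          (hfc t0 t ht0 ht)).symm
      have hA : (∫ s in (0:ℝ)..t0, f s) ≤ t0 * Real.exp (2 * Real.sqrt (1 + t0)) := by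
        have := hsm 0 t0 le_rfl ht0
        simpa using this
      have hB : (∫ s in t0..t, f s) ≤ G t - G t0 := by
        rw [← hftc]
        exact intervalIntegral.integral_mono_on hcase.le (hfc t0 t ht0 ht) hgdint hpt
      have hGt0 : t0 * Real.exp (2 * Real.sqrt (1 + t0)) ≤ G t0 := by
        have h2 := hkey1 t0 ht0 le_rfl
        have hE : (0:ℝ) < Real.exp (2 * Real.sqrt (1 + t0)) := Real.exp_pos _
        calc t0 * Real.exp (2 * Real.sqrt (1 + t0))
            ≤ (C * (1 + t0) ^ (-a / 2)) * Real.exp (2 * Real.sqrt (1 + t0)) :=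
              mul_le_mul_of_nonneg_right h2 hE.le
          _ = G t0 := by rw [hG_def]; ring
      calc (∫ s in (0:ℝ)..t, f s)
          = (∫ s in (0:ℝ)..t0, f s) + ∫ s in t0..t, f s := hsplit
        _ ≤ t0 * Real.exp (2 * Real.sqrt (1 + t0)) + (G t - G t0) := by linarith
        _ ≤ G t0 + (G t - G t0) := by linarith
        _ = G t := by ring
  -- finish
  rw [hrw]
  have hinv : Real.exp (-(2 * Real.sqrt (1 + t))) * Real.exp (2 * Real.sqrt (1 + t)) = 1 := by
    rw [← Real.exp_add]; simp
  have hE0 : (0:ℝ) ≤ Real.exp (-(2 * Real.sqrt (1 + t))) := (Real.exp_pos _).le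
  calc Real.exp (-(2 * Real.sqrt (1 + t))) * ∫ s in (0:ℝ)..t, f s
      ≤ Real.exp (-(2 * Real.sqrt (1 + t)))
          * (C * (Real.exp (2 * Real.sqrt (1 + t)) * (1 + t) ^ (-a / 2))) :=
        mul_le_mul_of_nonneg_left key hE0
    _ = C * (1 + t) ^ (-a / 2) := by
        rw [show Real.exp (-(2 * Real.sqrt (1 + t)))
            * (C * (Real.exp (2 * Real.sqrt (1 + t)) * (1 + t) ^ (-a / 2)))
          = (Real.exp (-(2 * Real.sqrt (1 + t))) * Real.exp (2 * Real.sqrt (1 + t)))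
            * (C * (1 + t) ^ (-a / 2)) from by ring, hinv, one_mul]
end

section
/- Let (a_{p,q})_{(p,q)∈ℤ×ℕ} be a square-summable family of complex numbers, let α ∈ ℕ, and let N > 0. Then ∑_{p,q} p²/(p² + (qπ/2)²) |a_{p,q}|² ≥ (1/N) ∑_{p,q} |a_{p,q}|² − (1/N^{1+α}) ∑_{p,q} (p² + (qπ/2)²)^α |a_{p,q}|², provided a_{0,q} = 0 for all q. -/
open scoped ENNReal

/-- Fourier-side lower bound (Lemma 6.3): for a square-summable family
`(a_{p,q})_{(p,q) ∈ ℤ×ℕ}` with `a_{0,q} = 0`, `α ∈ ℕ` and `N > 0`,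
`∑ p²/(p²+(qπ/2)²)|a_{p,q}|² ≥ (1/N)∑|a_{p,q}|² − (1/N^{1+α})∑(p²+(qπ/2)²)^α |a_{p,q}|²`.
(The inequality is stated in `ℝ≥0∞` with the subtracted term moved to the other side,
so that the possibly infinite right-hand sums are allowed.) -/
theorem stmt_7 (a : ℤ × ℕ → ℂ)
    (hsum : Summable fun pq : ℤ × ℕ => ‖a pq‖ ^ 2)
    (α : ℕ) (N : ℝ) (hN : 0 < N)
    (h0 : ∀ q : ℕ, a (0, q) = 0) :
    ENNReal.ofReal (1 / N) * ∑' pq : ℤ × ℕ, ENNReal.ofReal (‖a pq‖ ^ 2) ≤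
      (∑' pq : ℤ × ℕ,
          ENNReal.ofReal
            ((pq.1 : ℝ) ^ 2 / ((pq.1 : ℝ) ^ 2 + ((pq.2 : ℝ) * Real.pi / 2) ^ 2) *
              ‖a pq‖ ^ 2)) +
        ENNReal.ofReal (1 / N ^ (1 + α)) *
          ∑' pq : ℤ × ℕ,
            ENNReal.ofReal
              (((pq.1 : ℝ) ^ 2 + ((pq.2 : ℝ) * Real.pi / 2) ^ 2) ^ α * ‖a pq‖ ^ 2) := by
  rw [← ENNReal.tsum_mul_left, ← ENNReal.tsum_mul_left, ← ENNReal.tsum_add]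
  refine ENNReal.tsum_le_tsum fun pq => ?_
  obtain ⟨p, q⟩ := pq
  by_cases hp : p = 0
  · subst hp; rw [h0 q]; simp
  simp only
  set x : ℝ := ‖a (p, q)‖ ^ 2 with hxdef
  have hx0 : 0 ≤ x := sq_nonneg _
  set lam : ℝ := ((q : ℝ) * Real.pi / 2) ^ 2 with hlamdef
  have hlam : 0 ≤ lam := sq_nonneg _
  have h1 : (1 : ℝ) ≤ (p : ℝ) ^ 2 := by
    have h := Int.one_le_abs (by simpa using hp)
    have h' : (1 : ℝ) ≤ |(p : ℝ)| := by exact_mod_cast (by simpa using h : (1:ℤ) ≤ |p|)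
    nlinarith [sq_abs (p : ℝ), abs_nonneg (p : ℝ)]
  set M : ℝ := (p : ℝ) ^ 2 + lam with hMdef
  have hM1 : (1 : ℝ) ≤ M := by dsimp [M]; linarith
  have hM0 : (0 : ℝ) < M := lt_of_lt_of_le one_pos hM1
  have key : 1 / N * x ≤ (p : ℝ) ^ 2 / M * x + 1 / N ^ (1 + α) * (M ^ α * x) := by
    rcases le_or_gt M N with hMN | hMN
    · have h2 : 1 / N ≤ (p : ℝ) ^ 2 / M := by
        rw [div_le_div_iff₀ hN hM0]
        nlinarith
      have h3 : 0 ≤ 1 / N ^ (1 + α) * (M ^ α * x) := by positivity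
      nlinarith [mul_le_mul_of_nonneg_right h2 hx0]
    · have h2 : 1 / N ≤ 1 / N ^ (1 + α) * M ^ α := by
        have hNα : N ^ α ≤ M ^ α := pow_le_pow_left₀ hN.le hMN.le α
        rw [div_mul_eq_mul_div, le_div_iff₀ (by positivity : (0:ℝ) < N ^ (1 + α))]
        have e : 1 / N * N ^ (1 + α) = N ^ α := by
          rw [pow_add, pow_one]; field_simp
        rw [e]; simpa using hNα
      nlinarith [mul_le_mul_of_nonneg_right h2 hx0,
        mul_nonneg (div_nonneg (sq_nonneg ((p:ℝ))) hM0.le) hx0]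
  calc ENNReal.ofReal (1 / N) * ENNReal.ofReal x
      = ENNReal.ofReal (1 / N * x) := by
        rw [ENNReal.ofReal_mul (by positivity)]
    _ ≤ ENNReal.ofReal ((p : ℝ) ^ 2 / M * x + 1 / N ^ (1 + α) * (M ^ α * x)) :=
        ENNReal.ofReal_le_ofReal key
    _ ≤ _ := by
        rw [ENNReal.ofReal_add (by positivity) (by positivity),
          ENNReal.ofReal_mul (by positivity), ENNReal.ofReal_mul (by positivity)]
end

section
/- Let f : [0,∞) → [0,∞) be continuous, γ > 0, and C, ε > 0 with constants such that f(t) ≤ Cε(1+t)^{−γ/4} + Cε ∫₀ᵗ (1+(t−s))^{−γ/4} f(s) ds for all t ∈ [0,T], with γ > 4. If moreover ε is sufficiently small (depending only on C and γ), then f(t) ≤ 3Cε(1+t)^{−γ/4} for all t ∈ [0,T]. -/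
open Set

lemma aux_int_bound (δ : ℝ) (hδ : 1 < δ) (t : ℝ) (ht : 0 ≤ t) :
    ∫ s in (0:ℝ)..t, (1 + s) ^ (-δ) ≤ 1 / (δ - 1) := by
  have h1 : ∫ s in (0:ℝ)..t, (1 + s) ^ (-δ) = ∫ u in (1:ℝ)..(t+1), u ^ (-δ) := by
    have := intervalIntegral.integral_comp_add_right (a := 0) (b := t)
      (fun u : ℝ => u ^ (-δ)) 1
    simpa [add_comm] using this
  have h0 : (0:ℝ) ∉ uIcc (1:ℝ) (t+1) := by
    intro h
    rw [Set.mem_uIcc] at h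
    rcases h with ⟨h1, _⟩ | ⟨h1, _⟩ <;> linarith
  have h2 : ∫ u in (1:ℝ)..(t+1), u ^ (-δ)
      = ((t+1) ^ (-δ+1) - 1 ^ (-δ+1)) / (-δ+1) :=
    integral_rpow (Or.inr ⟨by intro h; rw [neg_eq_iff_eq_neg] at h; linarith [h], h0⟩)
  have hA : (0:ℝ) ≤ (t+1) ^ (-δ+1) := Real.rpow_nonneg (by linarith) _
  rw [h1, h2, Real.one_rpow]
  have heq : ((t+1) ^ (-δ+1) - 1) / (-δ+1) = (1 - (t+1) ^ (-δ+1)) / (δ-1) := by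
    rw [show (-δ+1) = -(δ-1) by ring, div_neg, ← neg_div]
    ring_nf
  rw [heq]
  exact div_le_div_of_nonneg_right (by linarith) (by linarith)

lemma aux_reflect (δ t : ℝ) :
    ∫ s in (0:ℝ)..t, (1 + (t - s)) ^ (-δ) = ∫ s in (0:ℝ)..t, (1 + s) ^ (-δ) := by
  have := intervalIntegral.integral_comp_sub_left (a := 0) (b := t)
    (fun u : ℝ => (1 + u) ^ (-δ)) t
  simpa using this

lemma aux_pointwise (δ : ℝ) (hδ : 0 < δ) (t : ℝ) (s : ℝ) (hs : s ∈ Set.Icc 0 t) :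
    (1 + (t - s)) ^ (-δ) * (1 + s) ^ (-δ) ≤
      2 ^ δ * (1 + t) ^ (-δ) * ((1 + s) ^ (-δ) + (1 + (t - s)) ^ (-δ)) := by
  obtain ⟨hs0, hst⟩ := hs
  have h1 : (0:ℝ) < 1 + s := by linarith
  have h2 : (0:ℝ) < 1 + (t - s) := by linarith
  have h3 : (0:ℝ) < 1 + t := by linarith
  have hhalf : ((1 + t)/2) ^ (-δ) = 2 ^ δ * (1 + t) ^ (-δ) := by
    rw [Real.div_rpow (by linarith) (by norm_num), Real.rpow_neg (by norm_num : (0:ℝ) ≤ 2)]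
    field_simp
  have hnn1 : (0:ℝ) ≤ (1 + s) ^ (-δ) := Real.rpow_nonneg h1.le _
  have hnn2 : (0:ℝ) ≤ (1 + (t - s)) ^ (-δ) := Real.rpow_nonneg h2.le _
  have hnn3 : (0:ℝ) ≤ 2 ^ δ * (1 + t) ^ (-δ) := by positivity
  rcases le_total (2*s) t with h | h
  · have hb : (1 + t)/2 ≤ 1 + (t - s) := by linarith
    have := Real.rpow_le_rpow_of_nonpos (by linarith) hb (by linarith : -δ ≤ 0)
    rw [hhalf] at this
    nlinarith
  · have hb : (1 + t)/2 ≤ 1 + s := by linarith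
    have := Real.rpow_le_rpow_of_nonpos (by linarith) hb (by linarith : -δ ≤ 0)
    rw [hhalf] at this
    nlinarith

lemma aux_cont1 (δ t : ℝ) : ContinuousOn (fun s : ℝ => (1 + s) ^ (-δ)) (Set.Icc 0 t) :=
  (continuous_const.add continuous_id).continuousOn.rpow_const
    (fun x hx => Or.inl (ne_of_gt (by have := hx.1; simp only [Pi.add_apply, id_eq]; linarith)))

lemma aux_cont2 (δ t : ℝ) : ContinuousOn (fun s : ℝ => (1 + (t - s)) ^ (-δ)) (Set.Icc 0 t) :=
  (continuous_const.add (continuous_const.sub continuous_id)).continuousOn.rpow_const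
    (fun x hx => Or.inl (ne_of_gt (by have h2 := hx.2; simp only [Pi.add_apply, Pi.sub_apply, id_eq]; linarith)))

lemma aux_conv (δ : ℝ) (hδ : 1 < δ) (t : ℝ) (ht : 0 ≤ t) :
    ∫ s in (0:ℝ)..t, (1 + (t - s)) ^ (-δ) * (1 + s) ^ (-δ) ≤
      2 ^ δ * (2 / (δ - 1)) * (1 + t) ^ (-δ) := by
  have huIcc : Set.uIcc (0:ℝ) t = Set.Icc 0 t := Set.uIcc_of_le ht
  have hi1 : IntervalIntegrable (fun s : ℝ => (1 + s) ^ (-δ)) MeasureTheory.volume 0 t :=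
    (aux_cont1 δ t).intervalIntegrable_of_Icc ht
  have hi2 : IntervalIntegrable (fun s : ℝ => (1 + (t - s)) ^ (-δ)) MeasureTheory.volume 0 t :=
    (aux_cont2 δ t).intervalIntegrable_of_Icc ht
  have hiprod : IntervalIntegrable
      (fun s : ℝ => (1 + (t - s)) ^ (-δ) * (1 + s) ^ (-δ)) MeasureTheory.volume 0 t :=
    ((aux_cont2 δ t).mul (aux_cont1 δ t)).intervalIntegrable_of_Icc ht
  have hisum : IntervalIntegrable
      (fun s : ℝ => 2 ^ δ * (1 + t) ^ (-δ) * ((1 + s) ^ (-δ) + (1 + (t - s)) ^ (-δ)))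
      MeasureTheory.volume 0 t :=
    (((aux_cont1 δ t).add (aux_cont2 δ t)).const_smul
      (2 ^ δ * (1 + t) ^ (-δ))).intervalIntegrable_of_Icc ht
  have hmono := intervalIntegral.integral_mono_on ht hiprod hisum
    (fun s hs => aux_pointwise δ (by linarith) t s hs)
  refine hmono.trans ?_
  rw [intervalIntegral.integral_const_mul, intervalIntegral.integral_add hi1 hi2, aux_reflect]
  have hib := aux_int_bound δ hδ t ht
  have h3 : (0:ℝ) ≤ 2 ^ δ * (1 + t) ^ (-δ) := by positivity
  calc 2 ^ δ * (1 + t) ^ (-δ) * ((∫ s in (0:ℝ)..t, (1 + s) ^ (-δ)) + ∫ s in (0:ℝ)..t, (1 + s) ^ (-δ))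
      ≤ 2 ^ δ * (1 + t) ^ (-δ) * (1/(δ-1) + 1/(δ-1)) := by
        apply mul_le_mul_of_nonneg_left (by linarith) h3
    _ = 2 ^ δ * (2 / (δ - 1)) * (1 + t) ^ (-δ) := by ring

/-- Bootstrap/continuity argument closing the decay estimate (Lemma 7.4): if
`f(t) ≤ Cε(1+t)^{−γ/4} + Cε ∫₀ᵗ (1+(t−s))^{−γ/4} f(s) ds` on `[0,T]` with `γ > 4` and
`ε` sufficiently small (depending only on `C` and `γ`), then
`f(t) ≤ 3Cε(1+t)^{−γ/4}` on `[0,T]`. -/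
theorem stmt_9 (C γ : ℝ) (hC : 0 < C) (hγ : 4 < γ) :
    ∃ ε₀ > (0:ℝ), ∀ ε : ℝ, 0 < ε → ε ≤ ε₀ →
      ∀ T : ℝ, 0 ≤ T → ∀ f : ℝ → ℝ,
        ContinuousOn f (Icc 0 T) → (∀ t ∈ Icc (0:ℝ) T, 0 ≤ f t) →
        (∀ t ∈ Icc (0:ℝ) T,
          f t ≤ C * ε * (1 + t) ^ (-γ / 4) +
            C * ε * ∫ s in (0:ℝ)..t, (1 + (t - s)) ^ (-γ / 4) * f s) →
        ∀ t ∈ Icc (0:ℝ) T, f t ≤ 3 * C * ε * (1 + t) ^ (-γ / 4) := by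
  set δ : ℝ := γ / 4 with hδdef
  have hδ : 1 < δ := by rw [hδdef]; linarith
  have hnegdiv : -γ / 4 = -δ := by rw [hδdef]; ring
  set K : ℝ := 2 ^ δ * (2 / (δ - 1)) with hKdef
  have hK : 0 < K := by
    apply mul_pos (Real.rpow_pos_of_pos (by norm_num) _)
    apply div_pos (by norm_num) (by linarith)
  refine ⟨1 / (3 * C * K), by positivity, ?_⟩
  intro ε hε hεle T hT f hfc hfnn hmain
  have hεK : 3 * C * ε * K ≤ 1 := by
    have := (le_div_iff₀ (by positivity : (0:ℝ) < 3 * C * K)).mp hεle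
    nlinarith
  simp only [hnegdiv] at hmain ⊢
  -- key improvement lemma
  have key : ∀ t ∈ Icc (0:ℝ) T, (∀ s ∈ Ico (0:ℝ) t, f s ≤ 3 * C * ε * (1 + s) ^ (-δ)) →
      f t ≤ 2 * C * ε * (1 + t) ^ (-δ) := by
    intro t ht hb
    have ht0 : 0 ≤ t := ht.1
    have hfct : ContinuousOn f (Icc 0 t) := hfc.mono (Icc_subset_Icc le_rfl ht.2)
    have hif : IntervalIntegrable (fun s => (1 + (t - s)) ^ (-δ) * f s)
        MeasureTheory.volume 0 t :=
      ((aux_cont2 δ t).mul hfct).intervalIntegrable_of_Icc ht0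
    have hig : IntervalIntegrable (fun s => (1 + (t - s)) ^ (-δ) * (3 * C * ε * (1 + s) ^ (-δ)))
        MeasureTheory.volume 0 t :=
      ((aux_cont2 δ t).mul ((aux_cont1 δ t).const_smul (3 * C * ε))).intervalIntegrable_of_Icc ht0
    have hres : MeasureTheory.volume.restrict (Icc (0:ℝ) t)
        = MeasureTheory.volume.restrict (Ico (0:ℝ) t) :=
      MeasureTheory.Measure.restrict_congr_set MeasureTheory.Ico_ae_eq_Icc.symm
    have hae : (fun s => (1 + (t - s)) ^ (-δ) * f s)
        ≤ᵐ[MeasureTheory.volume.restrict (Icc (0:ℝ) t)]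
        (fun s => (1 + (t - s)) ^ (-δ) * (3 * C * ε * (1 + s) ^ (-δ))) := by
      rw [hres]
      refine MeasureTheory.ae_restrict_of_forall_mem measurableSet_Ico ?_
      intro s hs
      have hk : (0:ℝ) ≤ (1 + (t - s)) ^ (-δ) :=
        Real.rpow_nonneg (by have := hs.2; have := hs.1; linarith) _
      exact mul_le_mul_of_nonneg_left (hb s hs) hk
    have hint : (∫ s in (0:ℝ)..t, (1 + (t - s)) ^ (-δ) * f s)
        ≤ 3 * C * ε * (K * (1 + t) ^ (-δ)) := by
      have h1 := intervalIntegral.integral_mono_ae_restrict ht0 hif hig hae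
      refine h1.trans ?_
      have h2 : ∫ s in (0:ℝ)..t, (1 + (t - s)) ^ (-δ) * (3 * C * ε * (1 + s) ^ (-δ))
          = 3 * C * ε * ∫ s in (0:ℝ)..t, (1 + (t - s)) ^ (-δ) * (1 + s) ^ (-δ) := by
        rw [← intervalIntegral.integral_const_mul]
        congr 1; ext s; ring
      rw [h2]
      have := aux_conv δ hδ t ht0
      have h3 : (0:ℝ) ≤ 3 * C * ε := by positivity
      rw [hKdef]
      nlinarith [this, h3]
    have hP : (0:ℝ) < (1 + t) ^ (-δ) := Real.rpow_pos_of_pos (by linarith) _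
    have h4 := hmain t ht
    have h5 : C * ε * (∫ s in (0:ℝ)..t, (1 + (t - s)) ^ (-δ) * f s)
        ≤ C * ε * (3 * C * ε * (K * (1 + t) ^ (-δ))) :=
      mul_le_mul_of_nonneg_left hint (by positivity)
    have h6 : (3 * C * ε * K) * (C * ε * (1 + t) ^ (-δ)) ≤ 1 * (C * ε * (1 + t) ^ (-δ)) :=
      mul_le_mul_of_nonneg_right hεK (by positivity)
    nlinarith [h4, h5, h6]
  -- continuity / sSup argument
  set S : Set ℝ := {t | t ∈ Icc (0:ℝ) T ∧ ∀ s ∈ Icc (0:ℝ) t, f s ≤ 3 * C * ε * (1 + s) ^ (-δ)}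
    with hSdef
  have h0S : (0:ℝ) ∈ S := by
    refine ⟨⟨le_rfl, hT⟩, ?_⟩
    intro s hs
    have hs0 : s = 0 := le_antisymm hs.2 hs.1
    subst hs0
    have := key 0 ⟨le_rfl, hT⟩ (by intro s hs; exact absurd hs.2 (not_lt.mpr hs.1))
    have hP : (0:ℝ) < (1 + (0:ℝ)) ^ (-δ) := Real.rpow_pos_of_pos (by norm_num) _
    nlinarith [mul_pos (mul_pos hC hε) hP]
  have hbdd : BddAbove S := ⟨T, fun x hx => hx.1.2⟩
  set t₀ : ℝ := sSup S with ht₀def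
  have ht₀mem : t₀ ∈ Icc (0:ℝ) T :=
    ⟨le_csSup hbdd h0S, csSup_le ⟨0, h0S⟩ (fun x hx => hx.1.2)⟩
  have hlt : ∀ s ∈ Ico (0:ℝ) t₀, f s ≤ 3 * C * ε * (1 + s) ^ (-δ) := by
    intro s hs
    obtain ⟨u, huS, hsu⟩ := exists_lt_of_lt_csSup ⟨0, h0S⟩ hs.2
    exact huS.2 s ⟨hs.1, hsu.le⟩
  have ht₀S : t₀ ∈ S := by
    refine ⟨ht₀mem, ?_⟩
    intro s hs
    rcases lt_or_eq_of_le hs.2 with h | h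
    · exact hlt s ⟨hs.1, h⟩
    · have h2 := key t₀ ht₀mem hlt
      have hP : (0:ℝ) < (1 + t₀) ^ (-δ) := Real.rpow_pos_of_pos (by linarith [ht₀mem.1]) _
      rw [h]
      nlinarith [mul_pos (mul_pos hC hε) hP]
  have hTeq : t₀ = T := by
    by_contra hne
    have ht₀T : t₀ < T := lt_of_le_of_ne ht₀mem.2 hne
    have hP : (0:ℝ) < (1 + t₀) ^ (-δ) := Real.rpow_pos_of_pos (by linarith [ht₀mem.1]) _
    have hneg : f t₀ - 3 * C * ε * (1 + t₀) ^ (-δ) < 0 := by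
      have := key t₀ ht₀mem hlt
      nlinarith [mul_pos (mul_pos hC hε) hP]
    have hgc : ContinuousWithinAt (fun x => f x - 3 * C * ε * (1 + x) ^ (-δ)) (Icc 0 T) t₀ := by
      apply ContinuousWithinAt.sub
      · exact hfc t₀ ht₀mem
      · exact (ContinuousWithinAt.const_smul
          (((continuous_const.add continuous_id).continuousOn.rpow_const
            (fun x hx => Or.inl (ne_of_gt (by have := hx.1; simp only [Pi.add_apply, id_eq]; linarith))))
            t₀ ht₀mem) (3 * C * ε))
    have hev : ∀ᶠ x in nhdsWithin t₀ (Icc (0:ℝ) T),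
        f x - 3 * C * ε * (1 + x) ^ (-δ) < 0 :=
      hgc.eventually_lt_const hneg
    rw [Filter.Eventually, Metric.mem_nhdsWithin_iff] at hev
    obtain ⟨η, hη, hball⟩ := hev
    set t₁ : ℝ := min T (t₀ + η / 2) with ht₁def
    have ht₀t₁ : t₀ < t₁ := lt_min ht₀T (by linarith)
    have ht₁mem : t₁ ∈ Icc (0:ℝ) T := ⟨le_trans ht₀mem.1 ht₀t₁.le, min_le_left _ _⟩
    have ht₁S : t₁ ∈ S := by
      refine ⟨ht₁mem, ?_⟩
      intro s hs
      rcases le_or_gt s t₀ with h | h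
      · exact ht₀S.2 s ⟨hs.1, h⟩
      · have hsmem : s ∈ Icc (0:ℝ) T := ⟨hs.1, le_trans hs.2 ht₁mem.2⟩
        have hdist : dist s t₀ < η := by
          rw [Real.dist_eq, abs_of_pos (by linarith)]
          have : s ≤ t₀ + η / 2 := le_trans hs.2 (min_le_right _ _)
          linarith
        have := hball ⟨Metric.mem_ball.mpr hdist, hsmem⟩
        simp only [Set.mem_setOf_eq] at this
        linarith
    exact absurd (le_csSup hbdd ht₁S) (not_le.mpr ht₀t₁)
  intro t ht
  exact ht₀S.2 t ⟨ht.1, hTeq ▸ ht.2⟩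
end
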